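/- With notation as in the context, suppose additionally that M₁[ker λ] and M₂[ker λ̃] are both free 𝒪-modules of rank 1, with bases δ₁ and δ₂ respectively. Then η_λ(M₁) = η_{λ̃}(M₂) = ([δ₁, δ₂]), the 𝒪-ideal generated by [δ₁, δ₂]. -/

import Mathlib

/-- The 0-th Fitting ideal of a module `N` over a commutative ring `R`. -/
def fittingIdeal (R : Type*) [CommRing R] (N : Type*) [AddCommGroup N] [Module R N] :
    Ideal R :=
  Ideal.span { r : R | ∃ (n : ℕ) (π : (Fin n → R) →ₗ[R] N) (_ : Function.Surjective π)
    (A : Matrix (Fin n) (Fin n) R), (∀ j, π (fun i => A i j) = 0) ∧ r = A.det }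

/-- The `𝒪`-submodule `e·M` of `M_E`. -/
noncomputable def eMsub {O TE M ME : Type*} [CommRing O] [CommRing TE] [Algebra O TE]
    [AddCommGroup M] [Module O M] [AddCommGroup ME] [Module O ME] [Module TE ME]
    [IsScalarTower O TE ME] (e : TE) (iota : M →ₗ[O] ME) : Submodule O ME :=
  Submodule.span O {x : ME | ∃ m : M, x = e • iota m}

/-- The congruence module `C₀^λ(M) = e·M/(e·M ∩ M)`, formed inside `M_E`. -/
noncomputable abbrev C0M {O TE M ME : Type*} [CommRing O] [CommRing TE] [Algebra O TE]
    [AddCommGroup M] [Module O M] [AddCommGroup ME] [Module O ME] [Module TE ME]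
    [IsScalarTower O TE ME] (e : TE) (iota : M →ₗ[O] ME) :=
  ↥(eMsub e iota) ⧸
    (Submodule.comap (eMsub e iota).subtype (eMsub e iota ⊓ LinearMap.range iota))

/-- The class of `e·m` in `C₀^λ(M)`. -/
noncomputable def clsM {O TE M ME : Type*} [CommRing O] [CommRing TE] [Algebra O TE]
    [AddCommGroup M] [Module O M] [AddCommGroup ME] [Module O ME] [Module TE ME]
    [IsScalarTower O TE ME] (e : TE) (iota : M →ₗ[O] ME) (m : M) : C0M e iota :=
  Submodule.Quotient.mk ⟨e • iota m, Submodule.subset_span ⟨m, rfl⟩⟩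

lemma fittingIdeal_le_of_equiv {R : Type*} [CommRing R] {N N' : Type*} [AddCommGroup N]
    [Module R N] [AddCommGroup N'] [Module R N'] (u : N ≃ₗ[R] N') :
    fittingIdeal R N ≤ fittingIdeal R N' := by
  rw [fittingIdeal, Ideal.span_le]
  rintro r ⟨n, π, hπ, A, hA, rfl⟩
  exact Ideal.subset_span ⟨n, u.toLinearMap ∘ₗ π, u.surjective.comp hπ, A,
    fun j => by simp [LinearMap.comp_apply, hA j], rfl⟩

lemma fittingIdeal_congr {R : Type*} [CommRing R] {N N' : Type*} [AddCommGroup N]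
    [Module R N] [AddCommGroup N'] [Module R N'] (u : N ≃ₗ[R] N') :
    fittingIdeal R N = fittingIdeal R N' :=
  le_antisymm (fittingIdeal_le_of_equiv u) (fittingIdeal_le_of_equiv u.symm)

lemma fittingIdeal_le_annihilator {R : Type*} [CommRing R] {N : Type*} [AddCommGroup N]
    [Module R N] : fittingIdeal R N ≤ Module.annihilator R N := by
  rw [fittingIdeal, Ideal.span_le]
  rintro r ⟨n, π, hπ, A, hA, rfl⟩
  rw [SetLike.mem_coe, Module.mem_annihilator]
  intro x
  obtain ⟨y, rfl⟩ := hπ x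
  have h1 : A.det • y = A.mulVec (A.adjugate.mulVec y) := by
    rw [Matrix.mulVec_mulVec, Matrix.mul_adjugate, Matrix.smul_mulVec,
      Matrix.one_mulVec]
  have h2 : A.mulVec (A.adjugate.mulVec y) =
      ∑ j, (A.adjugate.mulVec y) j • (fun i => A i j) := by
    funext i
    simp [Matrix.mulVec, dotProduct, Finset.sum_apply, mul_comm]
  rw [← map_smul, h1, h2, map_sum]
  refine Finset.sum_eq_zero fun j _ => ?_
  rw [map_smul, hA j, smul_zero]

lemma fittingIdeal_quot_span {R : Type*} [CommRing R] (a : R) :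
    fittingIdeal R (R ⧸ (Ideal.span {a} : Submodule R R)) = Ideal.span {a} := by
  refine le_antisymm ?_ ?_
  · intro r hr
    have := Module.mem_annihilator.mp (fittingIdeal_le_annihilator hr)
      (Submodule.Quotient.mk (1 : R))
    rw [← Submodule.Quotient.mk_smul, Submodule.Quotient.mk_eq_zero, smul_eq_mul,
      mul_one] at this
    exact this
  · rw [Ideal.span_le, Set.singleton_subset_iff]
    refine Ideal.subset_span ⟨1, (Ideal.span {a} : Submodule R R).mkQ ∘ₗ LinearMap.proj 0,
      (Submodule.mkQ_surjective _).comp (fun x => ⟨fun _ => x, rfl⟩),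
      Matrix.of (fun _ _ => a), fun j => ?_, by simp [Matrix.det_fin_one]⟩
    have : ((fun i => Matrix.of (fun _ _ => a) i j) : Fin 1 → R) 0 = a := rfl
    simp only [LinearMap.comp_apply, LinearMap.proj_apply, Submodule.mkQ_apply,
      Submodule.Quotient.mk_eq_zero]
    exact Ideal.subset_span rfl


set_option maxHeartbeats 1000000 in
lemma ME_torsionfree {O E ME : Type*} [CommRing O] [IsDomain O] [Field E] [Algebra O E]
    [IsFractionRing O E] [AddCommGroup ME] [Module O ME] [Module E ME]
    [IsScalarTower O E ME] {o : O} (ho : o ≠ 0) {y : ME} (hy : o • y = 0) : y = 0 := by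
  have h1 : algebraMap O E o • y = 0 := by rwa [algebraMap_smul]
  have h2 : algebraMap O E o ≠ 0 := fun h =>
    ho (IsFractionRing.injective O E (by rw [h, map_zero]))
  calc y = (algebraMap O E o)⁻¹ • (algebraMap O E o • y) := (inv_smul_smul₀ h2 y).symm
    _ = 0 := by rw [h1, smul_zero]

lemma iota_inj' {O M ME : Type*} [CommRing O] [IsDomain O]
    [AddCommGroup M] [Module O M] [Module.Free O M]
    [AddCommGroup ME] [Module O ME]
    (iota : M →ₗ[O] ME) [IsLocalizedModule (nonZeroDivisors O) iota] :
    Function.Injective iota := by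
  have : NoZeroSMulDivisors O M := noZeroSMulDivisors_iff_right_eq_zero_of_smul.mpr fun r hr m h => (smul_eq_zero_iff_right hr).mp h
  intro a b hab
  have h0 : iota (a - b) = 0 := by rw [map_sub, hab, sub_self]
  rw [IsLocalizedModule.eq_zero_iff (nonZeroDivisors O)] at h0
  obtain ⟨s, hs⟩ := h0
  have hs' : (s : O) • (a - b) = 0 := hs
  have := (smul_eq_zero.mp hs').resolve_left (nonZeroDivisors.coe_ne_zero s)
  exact sub_eq_zero.mp this

lemma TE_reduced' {O T TE : Type*} [CommRing O] [IsDomain O] [IsLocalRing O]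
    [CommRing T] [IsReduced T] [Algebra O T] [Module.Finite O T] [Module.Flat O T]
    [IsNoetherianRing O]
    [CommRing TE] [Algebra T TE]
    [IsLocalization (Algebra.algebraMapSubmonoid T (nonZeroDivisors O)) TE] :
    IsReduced TE := by
  have : Module.FinitePresentation O T := Module.finitePresentation_of_finite O T
  have : Module.Free O T := Module.free_of_flat_of_isLocalRing
  have : NoZeroSMulDivisors O T := noZeroSMulDivisors_iff_right_eq_zero_of_smul.mpr fun r hr m h => (smul_eq_zero_iff_right hr).mp h
  constructor
  intro x hx
  obtain ⟨⟨t, s⟩, hts⟩ := IsLocalization.surj (Algebra.algebraMapSubmonoid T (nonZeroDivisors O)) x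
  have hnt : IsNilpotent (algebraMap T TE t) := by
    rw [← hts]; exact (Commute.all _ _).isNilpotent_mul_right hx
  obtain ⟨k, hk⟩ := hnt
  rw [← map_pow] at hk
  rw [IsLocalization.map_eq_zero_iff (Algebra.algebraMapSubmonoid T (nonZeroDivisors O))] at hk
  obtain ⟨m, hm⟩ := hk
  obtain ⟨o, ho, hom⟩ := m.2
  rw [← hom, ← Algebra.smul_def] at hm
  have htk : t ^ k = 0 := by
    have ho0 : o ≠ 0 := nonZeroDivisors.ne_zero ho
    exact (smul_eq_zero.mp hm).resolve_left ho0
  have ht0 : t = 0 := IsReduced.eq_zero t ⟨k, htk⟩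
  rw [ht0, map_zero] at hts
  have hu := IsLocalization.map_units TE s
  obtain ⟨v, hv⟩ := hu.exists_right_inv
  have := congrArg (· * v) hts
  simpa [mul_assoc, hv] using this

lemma eigen_mul {E TE : Type*} [Field E] [CommRing TE] [Algebra E TE] (hred : IsReduced TE)
    (lamE : TE →ₐ[E] E) (e : TE) (he1 : lamE e = 1)
    (he2 : ∀ P : Ideal TE, P.IsPrime → P ≠ RingHom.ker lamE → e ∈ P) (t : TE) :
    t * e = lamE t • e := by
  have hnil : (t - algebraMap E TE (lamE t)) * e ∈ nilradical TE := by
    rw [nilradical_eq_sInf, Ideal.mem_sInf]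
    intro P hP
    by_cases hPk : P = RingHom.ker lamE
    · subst hPk
      rw [RingHom.mem_ker]
      simp [map_mul, map_sub, he1]
    · exact P.mul_mem_left _ (he2 P hP hPk)
  have h0 : (t - algebraMap E TE (lamE t)) * e = 0 :=
    IsNilpotent.eq_zero (mem_nilradical.mp hnil)
  rw [sub_mul] at h0
  rw [Algebra.smul_def]
  exact sub_eq_zero.mp h0

lemma delta_fixed {O E T TE M ME : Type*} [CommRing O] [IsDomain O] [Field E] [Algebra O E]
    [IsFractionRing O E] [CommRing T] [Algebra O T]
    [CommRing TE] [Algebra T TE] [Algebra O TE] [Algebra E TE]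
    [IsScalarTower O T TE] [IsScalarTower O E TE]
    [IsLocalization (Algebra.algebraMapSubmonoid T (nonZeroDivisors O)) TE]
    (lam : T →ₐ[O] O) (lamE : TE →ₐ[E] E) (e : TE)
    (hlamE : ∀ t : T, lamE (algebraMap T TE t) = algebraMap O E (lam t))
    (he1 : lamE e = 1)
    [AddCommGroup M] [Module O M] [Module T M] [IsScalarTower O T M] [Module.Free O M]
    [AddCommGroup ME] [Module O ME] [Module E ME] [Module TE ME]
    [IsScalarTower O TE ME] [IsScalarTower O E ME]
    (iota : M →ₗ[O] ME) [IsLocalizedModule (nonZeroDivisors O) iota]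
    (hiota : ∀ (t : T) (m : M), iota (t • m) = algebraMap T TE t • iota m)
    (δ : M) (hδ : ∀ t : T, lam t = 0 → t • δ = 0) :
    e • iota δ = iota δ := by
  obtain ⟨⟨t, s⟩, hts⟩ :=
    IsLocalization.surj (Algebra.algebraMapSubmonoid T (nonZeroDivisors O)) (1 - e)
  have hlamt : lam t = 0 := by
    have := congrArg lamE hts
    rw [map_mul, map_sub, map_one, he1, sub_self, zero_mul, hlamE] at this
    exact IsFractionRing.injective O E (by rw [← this, map_zero])
  have ht0 : algebraMap T TE t • iota δ = 0 := by
    rw [← hiota, hδ t hlamt, map_zero]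
  obtain ⟨o, ho, hom⟩ := s.2
  have hsδ : (algebraMap T TE (s : T)) • iota δ = o • iota δ := by
    rw [← hiota, ← hom, algebraMap_smul, map_smul]
  have hkey : o • ((1 - e) • iota δ) = 0 := by
    have h1 : ((1 - e) * algebraMap T TE (s : T)) • iota δ = 0 := by rw [hts, ht0]
    rw [mul_smul, hsδ] at h1
    calc o • ((1 - e) • iota δ)
        = algebraMap O TE o • ((1 - e) • iota δ) := (algebraMap_smul TE o _).symm
      _ = ((1 - e) * algebraMap O TE o) • iota δ := by rw [← mul_smul, mul_comm]
      _ = (1 - e) • (algebraMap O TE o • iota δ) := by rw [mul_smul]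
      _ = (1 - e) • (o • iota δ) := by rw [algebraMap_smul]
      _ = 0 := h1
  have hz : (1 - e) • iota δ = 0 :=
    ME_torsionfree (E := E) (nonZeroDivisors.ne_zero ho) hkey
  rw [sub_smul, one_smul, sub_eq_zero] at hz
  exact hz.symm

set_option maxHeartbeats 2000000 in
theorem keyLemma
    {O : Type*} [CommRing O] [IsDomain O] [IsDiscreteValuationRing O]
    {E : Type*} [Field E] [Algebra O E] [IsFractionRing O E]
    {T : Type*} [CommRing T] [IsReduced T]
    [Algebra O T] [Module.Finite O T] [Module.Flat O T]
    (lam : T →ₐ[O] O)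
    {TE : Type*} [CommRing TE] [Algebra T TE] [Algebra O TE] [Algebra E TE]
    [IsScalarTower O T TE] [IsScalarTower O E TE]
    [IsLocalization (Algebra.algebraMapSubmonoid T (nonZeroDivisors O)) TE]
    (lamE : TE →ₐ[E] E) (e : TE)
    (hlamE : ∀ t : T, lamE (algebraMap T TE t) = algebraMap O E (lam t))
    (he1 : lamE e = 1)
    (he2 : ∀ P : Ideal TE, P.IsPrime → P ≠ RingHom.ker lamE → e ∈ P)
    {T' : Type*} [CommRing T']
    [Algebra O T'] [Module.Finite O T']
    (lam' : T' →ₐ[O] O)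
    {TE' : Type*} [CommRing TE'] [Algebra T' TE'] [Algebra O TE'] [Algebra E TE']
    [IsScalarTower O T' TE'] [IsScalarTower O E TE']
    [IsLocalization (Algebra.algebraMapSubmonoid T' (nonZeroDivisors O)) TE']
    (lamE' : TE' →ₐ[E] E) (e' : TE')
    (hlamE' : ∀ t : T', lamE' (algebraMap T' TE' t) = algebraMap O E (lam' t))
    (he1' : lamE' e' = 1)
    {M₁ : Type*} [AddCommGroup M₁] [Module O M₁] [Module T M₁] [IsScalarTower O T M₁]
    [Module.Finite T M₁] [Module.Free O M₁]
    {ME₁ : Type*} [AddCommGroup ME₁] [Module O ME₁] [Module E ME₁] [Module TE ME₁]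
    [IsScalarTower O TE ME₁] [IsScalarTower O E ME₁] [IsScalarTower E TE ME₁]
    (iota₁ : M₁ →ₗ[O] ME₁) [IsLocalizedModule (nonZeroDivisors O) iota₁]
    (hiota₁ : ∀ (t : T) (m : M₁), iota₁ (t • m) = algebraMap T TE t • iota₁ m)
    {M₂ : Type*} [AddCommGroup M₂] [Module O M₂] [Module T' M₂] [IsScalarTower O T' M₂]
    [Module.Finite T' M₂] [Module.Free O M₂]
    {ME₂ : Type*} [AddCommGroup ME₂] [Module O ME₂] [Module E ME₂] [Module TE' ME₂]
    [IsScalarTower O TE' ME₂] [IsScalarTower O E ME₂] [IsScalarTower E TE' ME₂]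
    (iota₂ : M₂ →ₗ[O] ME₂) [IsLocalizedModule (nonZeroDivisors O) iota₂]
    (hiota₂ : ∀ (t : T') (m : M₂), iota₂ (t • m) = algebraMap T' TE' t • iota₂ m)
    (B : M₁ →ₗ[O] M₂ →ₗ[O] O)
    (hB : Function.Surjective B)
    (BE : ME₁ →ₗ[E] ME₂ →ₗ[E] E)
    (hBE : ∀ (m : M₁) (m' : M₂), BE (iota₁ m) (iota₂ m') = algebraMap O E (B m m'))
    (horth₂ : ∀ (m : M₁) (m' : M₂), BE ((1 - e) • iota₁ m) (e' • iota₂ m') = 0)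
    (δ₁ : M₁) (δ₂ : M₂)
    (hδ₁ : ∀ t : T, lam t = 0 → t • δ₁ = 0)
    (hδ₁basis : ∀ m : M₁, (∀ t : T, lam t = 0 → t • m = 0) → ∃! c : O, m = c • δ₁)
    (hδ₂ : ∀ t : T', lam' t = 0 → t • δ₂ = 0)
    (hδ₂basis : ∀ m : M₂, (∀ t : T', lam' t = 0 → t • m = 0) → ∃! c : O, m = c • δ₂) :
    fittingIdeal O ((eMsub e iota₁) ⧸
      (Submodule.comap (eMsub e iota₁).subtype (eMsub e iota₁ ⊓ LinearMap.range iota₁)))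
      = Ideal.span {B δ₁ δ₂} := by
  classical
  have halgInj : Function.Injective (algebraMap O E) := IsFractionRing.injective O E
  have hred : IsReduced TE := TE_reduced' (O := O) (T := T)
  have hi₁ : Function.Injective iota₁ := iota_inj' iota₁
  have heig : ∀ t : TE, t * e = lamE t • e := eigen_mul hred lamE e he1 he2
  -- scalars from O commute with TE-scalars on ME₁
  have hcomm : ∀ (c : TE) (o : O) (y : ME₁), c • o • y = o • c • y := by
    intro c o y
    rw [← algebraMap_smul TE o y, ← mul_smul, mul_comm, mul_smul, algebraMap_smul]
  -- the kernel of lam kills eMsub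
  have hsmul0 : ∀ t : T, lam t = 0 → ∀ x ∈ eMsub e iota₁, algebraMap T TE t • x = 0 := by
    intro t ht x hx
    induction hx using Submodule.span_induction with
    | mem y hy =>
        obtain ⟨m, rfl⟩ := hy
        rw [← mul_smul, heig, hlamE, ht, map_zero, zero_smul, zero_smul]
    | zero => rw [smul_zero]
    | add y z _ _ ihy ihz => rw [smul_add, ihy, ihz, add_zero]
    | smul o y _ ihy => rw [hcomm, ihy, smul_zero]
  -- iota₁ δ₁ and iota₂ δ₂ are fixed by e, e'
  have hfix₁ : e • iota₁ δ₁ = iota₁ δ₁ :=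
    delta_fixed lam lamE e hlamE he1 iota₁ hiota₁ δ₁ hδ₁
  have hfix₂ : e' • iota₂ δ₂ = iota₂ δ₂ :=
    delta_fixed lam' lamE' e' hlamE' he1' iota₂ hiota₂ δ₂ hδ₂
  -- every element of eMsub is an E-multiple of iota₁ δ₁
  have hB2 : ∀ x ∈ eMsub e iota₁, ∃ α : E, x = α • iota₁ δ₁ := by
    intro x hx
    induction hx using Submodule.span_induction with
    | mem y hy =>
        obtain ⟨m, rfl⟩ := hy
        obtain ⟨⟨m', s⟩, hms⟩ := IsLocalizedModule.surj (nonZeroDivisors O) iota₁ (e • iota₁ m)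
        have hm' : ∀ t : T, lam t = 0 → t • m' = 0 := by
          intro t ht
          apply hi₁
          rw [map_zero, hiota₁, ← hms, Submonoid.smul_def, hcomm, hsmul0 t ht _ (Submodule.subset_span ⟨m, rfl⟩),
            smul_zero]
        obtain ⟨c, hc, -⟩ := hδ₁basis m' hm'
        have hs0 : algebraMap O E (s : O) ≠ 0 := fun h =>
          nonZeroDivisors.coe_ne_zero s (halgInj (by rw [h, map_zero]))
        refine ⟨(algebraMap O E (s : O))⁻¹ * algebraMap O E c, ?_⟩
        have h1 : algebraMap O E (s : O) • (e • iota₁ m)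
            = algebraMap O E c • iota₁ δ₁ := by
          rw [algebraMap_smul, algebraMap_smul]
          show (s : O) • (e • iota₁ m) = c • iota₁ δ₁
          rw [← Submonoid.smul_def, hms, hc, map_smul]
        calc e • iota₁ m
            = (algebraMap O E (s : O))⁻¹ • (algebraMap O E (s : O) • (e • iota₁ m)) :=
              (inv_smul_smul₀ hs0 _).symm
          _ = ((algebraMap O E (s : O))⁻¹ * algebraMap O E c) • iota₁ δ₁ := by
              rw [h1, smul_smul]
    | zero => exact ⟨0, by rw [zero_smul]⟩
    | add y z _ _ ihy ihz =>
        obtain ⟨α, hα⟩ := ihy; obtain ⟨β, hβ⟩ := ihz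
        exact ⟨α + β, by rw [hα, hβ, add_smul]⟩
    | smul o y _ ihy =>
        obtain ⟨α, hα⟩ := ihy
        exact ⟨algebraMap O E o * α, by rw [hα, ← algebraMap_smul E o, smul_smul]⟩
  -- pairing of eMsub generators with iota₂ δ₂
  have hBδ₂ : ∀ m : M₁, BE (e • iota₁ m) (iota₂ δ₂) = algebraMap O E (B m δ₂) := by
    intro m
    have hz : BE ((1 - e) • iota₁ m) (iota₂ δ₂) = 0 := by
      rw [← hfix₂]; exact horth₂ m δ₂
    have hdecomp : e • iota₁ m + (1 - e) • iota₁ m = iota₁ m := by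
      rw [← add_smul]
      norm_num
    calc BE (e • iota₁ m) (iota₂ δ₂)
        = BE (e • iota₁ m) (iota₂ δ₂) + BE ((1 - e) • iota₁ m) (iota₂ δ₂) := by
          rw [hz, add_zero]
      _ = BE (iota₁ m) (iota₂ δ₂) := by rw [← LinearMap.add_apply, ← map_add, hdecomp]
      _ = algebraMap O E (B m δ₂) := hBE m δ₂
  -- δ₂ is nonzero
  have hδ₂ne : δ₂ ≠ 0 := by
    intro h0
    obtain ⟨c, hc, hcu⟩ := hδ₂basis 0 (fun t _ => smul_zero t)
    have h01 : (0 : O) = c := hcu 0 (by simp)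
    have h11 : (1 : O) = c := hcu 1 (by simp [h0])
    exact one_ne_zero (h11.trans h01.symm)
  -- existence of m₁ with B m₁ δ₂ = 1
  have hM₂fin : Module.Finite O M₂ := Module.Finite.trans T' M₂
  have hM₂nzd : NoZeroSMulDivisors O M₂ := noZeroSMulDivisors_iff_right_eq_zero_of_smul.mpr fun r hr m h => (smul_eq_zero_iff_right hr).mp h
  obtain ⟨m₁, hm₁B⟩ : ∃ m₁ : M₁, B m₁ δ₂ = 1 := by
    set b := Module.Free.chooseBasis O M₂ with hbdef
    by_cases hall : ∀ i, b.repr δ₂ i ∈ IsLocalRing.maximalIdeal O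
    · exfalso
      obtain ⟨ϖ, hϖ⟩ := IsDiscreteValuationRing.exists_irreducible O
      have hmax := hϖ.maximalIdeal_eq
      have hdiv : ∀ i, ∃ u : O, b.repr δ₂ i = ϖ * u := by
        intro i
        have := hall i
        rw [hmax, Ideal.mem_span_singleton] at this
        obtain ⟨u, hu⟩ := this
        exact ⟨u, hu⟩
      choose u hu using hdiv
      set m : M₂ := ∑ i, u i • b i with hm
      have hϖm : ϖ • m = δ₂ := by
        rw [hm, Finset.smul_sum]
        calc ∑ i, ϖ • u i • b i = ∑ i, b.repr δ₂ i • b i := by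
              refine Finset.sum_congr rfl fun i _ => ?_
              rw [smul_smul, ← hu i]
          _ = δ₂ := b.sum_repr δ₂
      have hϖ0 : ϖ ≠ 0 := hϖ.ne_zero
      have hmk : ∀ t : T', lam' t = 0 → t • m = 0 := by
        intro t ht
        have h1 : t • (ϖ • m) = 0 := by rw [hϖm]; exact hδ₂ t ht
        rw [← algebraMap_smul T' ϖ m, ← mul_smul, mul_comm, mul_smul, algebraMap_smul] at h1
        exact (smul_eq_zero.mp h1).resolve_left hϖ0
      obtain ⟨c, hc, -⟩ := hδ₂basis m hmk
      have hzero : (1 - c * ϖ) • m = 0 := by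
        rw [sub_smul, one_smul, mul_smul, hϖm, ← hc, sub_self]
      have h1c : (1 - c * ϖ) ≠ 0 := by
        intro h
        exact hϖ.not_isUnit (IsUnit.of_mul_eq_one (a := ϖ) c (by linear_combination -h))
      have hm0 : m = 0 := (smul_eq_zero.mp hzero).resolve_left h1c
      rw [hm0, smul_zero] at hϖm
      exact hδ₂ne hϖm.symm
    · push_neg at hall
      obtain ⟨i₀, hi₀⟩ := hall
      have hunit : IsUnit (b.repr δ₂ i₀) := by
        rwa [IsLocalRing.mem_maximalIdeal, mem_nonunits_iff, not_not] at hi₀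
      obtain ⟨v, hv⟩ := hunit.exists_left_inv
      obtain ⟨n₁, hn₁⟩ := hB (v • b.coord i₀)
      refine ⟨n₁, ?_⟩
      rw [hn₁, LinearMap.smul_apply, Module.Basis.coord_apply, smul_eq_mul, hv]
  -- the pairing against iota₂ δ₂ takes values in O on eMsub
  have hmem0 : ∀ x ∈ eMsub e iota₁, ∃ o : O, algebraMap O E o = BE x (iota₂ δ₂) := by
    intro x hx
    induction hx using Submodule.span_induction with
    | mem y hy =>
        obtain ⟨m, rfl⟩ := hy
        exact ⟨B m δ₂, (hBδ₂ m).symm⟩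
    | zero => exact ⟨0, by rw [map_zero, map_zero, LinearMap.zero_apply]⟩
    | add y z _ _ ihy ihz =>
        obtain ⟨a, ha⟩ := ihy; obtain ⟨c, hc⟩ := ihz
        exact ⟨a + c, by rw [map_add, ha, hc, map_add, LinearMap.add_apply]⟩
    | smul o y _ ihy =>
        obtain ⟨a, ha⟩ := ihy
        refine ⟨o * a, ?_⟩
        rw [map_mul, ha, ← algebraMap_smul E o y, map_smul, LinearMap.smul_apply, smul_eq_mul]
  choose ψfun hψ using fun x : ↥(eMsub e iota₁) => hmem0 x.1 x.2
  have hψadd : ∀ x y : ↥(eMsub e iota₁), ψfun (x + y) = ψfun x + ψfun y := by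
    intro x y
    apply halgInj
    rw [hψ, map_add, Submodule.coe_add, map_add, LinearMap.add_apply, ← hψ x, ← hψ y]
  have hψsmul : ∀ (o : O) (x : ↥(eMsub e iota₁)), ψfun (o • x) = o • ψfun x := by
    intro o x
    apply halgInj
    rw [hψ, Submodule.coe_smul, ← algebraMap_smul E o (x : ME₁), map_smul,
      LinearMap.smul_apply, smul_eq_mul, ← hψ x, smul_eq_mul, map_mul]
  set ψ : ↥(eMsub e iota₁) →ₗ[O] O :=
    { toFun := ψfun, map_add' := hψadd, map_smul' := hψsmul } with hψdef
  have hψap : ∀ x : ↥(eMsub e iota₁), algebraMap O E (ψ x) = BE (x : ME₁) (iota₂ δ₂) := hψ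
  set c₀ : O := B δ₁ δ₂ with hc₀def
  have hδ₁mem : iota₁ δ₁ ∈ eMsub e iota₁ := by
    rw [← hfix₁]; exact Submodule.subset_span ⟨δ₁, rfl⟩
  have hψδ₁ : ψ ⟨iota₁ δ₁, hδ₁mem⟩ = c₀ := halgInj ((hψap _).trans (hBE δ₁ δ₂))
  set x₁ : ↥(eMsub e iota₁) := ⟨e • iota₁ m₁, Submodule.subset_span ⟨m₁, rfl⟩⟩ with hx₁def
  have hψx₁ : ψ x₁ = 1 := halgInj ((hψap _).trans ((hBδ₂ m₁).trans (by rw [hm₁B])))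
  have hc₀ : c₀ ≠ 0 := by
    intro h0
    obtain ⟨α, hα⟩ := hB2 (e • iota₁ m₁) (Submodule.subset_span ⟨m₁, rfl⟩)
    have h1 : (1 : E) = α * algebraMap O E c₀ := by
      calc (1 : E) = algebraMap O E (B m₁ δ₂) := by rw [hm₁B, map_one]
        _ = BE (e • iota₁ m₁) (iota₂ δ₂) := (hBδ₂ m₁).symm
        _ = BE (α • iota₁ δ₁) (iota₂ δ₂) := by rw [← hα]
        _ = α * BE (iota₁ δ₁) (iota₂ δ₂) := by
            rw [map_smul, LinearMap.smul_apply, smul_eq_mul]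
        _ = α * algebraMap O E c₀ := by rw [hBE]
    rw [h0, map_zero, mul_zero] at h1
    exact one_ne_zero h1
  have hψinj : Function.Injective ψ := by
    rw [injective_iff_map_eq_zero]
    intro x hx0
    obtain ⟨α, hα⟩ := hB2 x.1 x.2
    have hz : BE (x : ME₁) (iota₂ δ₂) = 0 := by rw [← hψap x, hx0, map_zero]
    rw [hα, map_smul, LinearMap.smul_apply, smul_eq_mul, hBE] at hz
    have hα0 : α = 0 := by
      rcases mul_eq_zero.mp hz with h | h
      · exact h
      · exact absurd (halgInj (h.trans (map_zero _).symm)) hc₀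
    apply Subtype.ext
    rw [Submodule.coe_zero, hα, hα0, zero_smul]
  have hψsurj : Function.Surjective ψ := by
    intro o
    exact ⟨o • x₁, by rw [map_smul, hψx₁, smul_eq_mul, mul_one]⟩
  set Ψ : ↥(eMsub e iota₁) ≃ₗ[O] O := LinearEquiv.ofBijective ψ ⟨hψinj, hψsurj⟩ with hΨdef
  set K : Submodule O ↥(eMsub e iota₁) :=
    Submodule.comap (eMsub e iota₁).subtype (eMsub e iota₁ ⊓ LinearMap.range iota₁) with hKdef
  have hmap : Submodule.map (Ψ : ↥(eMsub e iota₁) →ₗ[O] O) K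
      = (Ideal.span {c₀} : Submodule O O) := by
    apply le_antisymm
    · rintro y ⟨x, hxK, rfl⟩
      obtain ⟨hx1, hx2⟩ := hxK
      obtain ⟨m, hm⟩ := hx2
      rw [Submodule.subtype_apply] at hm
      have hmker : ∀ t : T, lam t = 0 → t • m = 0 := by
        intro t ht
        apply hi₁
        rw [map_zero, hiota₁, hm]
        exact hsmul0 t ht _ hx1
      obtain ⟨c, hc, -⟩ := hδ₁basis m hmker
      have hψx : ψ x = c * c₀ := by
        apply halgInj
        rw [hψap x, ← hm, hc, map_smul, ← algebraMap_smul E c (iota₁ δ₁),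
          map_smul, LinearMap.smul_apply, smul_eq_mul, hBE, map_mul]
      show Ψ x ∈ Ideal.span {c₀}
      have : Ψ x = ψ x := rfl
      rw [this, hψx]
      exact Ideal.mem_span_singleton.mpr (dvd_mul_left c₀ c)
    · intro y hy
      rw [Ideal.mem_span_singleton] at hy
      obtain ⟨d, rfl⟩ := hy
      have hKbase : (⟨iota₁ δ₁, hδ₁mem⟩ : ↥(eMsub e iota₁)) ∈ K :=
        Submodule.mem_comap.mpr ⟨hδ₁mem, ⟨δ₁, rfl⟩⟩
      refine Submodule.mem_map.mpr ⟨d • ⟨iota₁ δ₁, hδ₁mem⟩, K.smul_mem d hKbase, ?_⟩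
      show ψ _ = c₀ * d
      rw [map_smul, hψδ₁, smul_eq_mul, mul_comm]
  have hequiv : ((eMsub e iota₁) ⧸ K) ≃ₗ[O] (O ⧸ (Ideal.span {c₀} : Submodule O O)) :=
    Submodule.Quotient.equiv K (Ideal.span {c₀} : Submodule O O) Ψ hmap
  rw [fittingIdeal_congr hequiv, fittingIdeal_quot_span]


/-- In the situation of the perfect-pairing setup (see Statement 10):
if moreover `M₁[ker λ]` and `M₂[ker λ̃]` are free `𝒪`-modules of rank 1 with bases
`δ₁`, `δ₂` (encoded by: `δᵢ` is killed by `ker λ` resp. `ker λ̃`, and every element so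
killed is `c • δᵢ` for a unique `c : 𝒪`), then
`η_λ(M₁) = η_{λ̃}(M₂) = ([δ₁, δ₂])`, the `𝒪`-ideal generated by `[δ₁, δ₂]`. -/
theorem statement11
    {O : Type*} [CommRing O] [IsDomain O] [IsDiscreteValuationRing O]
    [IsAdicComplete (IsLocalRing.maximalIdeal O) O]
    {E : Type*} [Field E] [Algebra O E] [IsFractionRing O E]
    {T : Type*} [CommRing T] [IsReduced T] [IsLocalRing T]
    [Algebra O T] [Module.Finite O T] [Module.Flat O T]
    (lam : T →ₐ[O] O)
    {TE : Type*} [CommRing TE] [Algebra T TE] [Algebra O TE] [Algebra E TE]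
    [IsScalarTower O T TE] [IsScalarTower O E TE]
    [IsLocalization (Algebra.algebraMapSubmonoid T (nonZeroDivisors O)) TE]
    (lamE : TE →ₐ[E] E) (e : TE)
    (hlamE : ∀ t : T, lamE (algebraMap T TE t) = algebraMap O E (lam t))
    (he1 : lamE e = 1)
    (he2 : ∀ P : Ideal TE, P.IsPrime → P ≠ RingHom.ker lamE → e ∈ P)
    {T' : Type*} [CommRing T'] [IsReduced T'] [IsLocalRing T']
    [Algebra O T'] [Module.Finite O T'] [Module.Flat O T']
    (lam' : T' →ₐ[O] O)
    {TE' : Type*} [CommRing TE'] [Algebra T' TE'] [Algebra O TE'] [Algebra E TE']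
    [IsScalarTower O T' TE'] [IsScalarTower O E TE']
    [IsLocalization (Algebra.algebraMapSubmonoid T' (nonZeroDivisors O)) TE']
    (lamE' : TE' →ₐ[E] E) (e' : TE')
    (hlamE' : ∀ t : T', lamE' (algebraMap T' TE' t) = algebraMap O E (lam' t))
    (he1' : lamE' e' = 1)
    (he2' : ∀ P : Ideal TE', P.IsPrime → P ≠ RingHom.ker lamE' → e' ∈ P)
    {M₁ : Type*} [AddCommGroup M₁] [Module O M₁] [Module T M₁] [IsScalarTower O T M₁]
    [Module.Finite T M₁] [Module.Free O M₁]
    {ME₁ : Type*} [AddCommGroup ME₁] [Module O ME₁] [Module E ME₁] [Module TE ME₁]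
    [IsScalarTower O TE ME₁] [IsScalarTower O E ME₁] [IsScalarTower E TE ME₁]
    (iota₁ : M₁ →ₗ[O] ME₁) [IsLocalizedModule (nonZeroDivisors O) iota₁]
    (hiota₁ : ∀ (t : T) (m : M₁), iota₁ (t • m) = algebraMap T TE t • iota₁ m)
    {M₂ : Type*} [AddCommGroup M₂] [Module O M₂] [Module T' M₂] [IsScalarTower O T' M₂]
    [Module.Finite T' M₂] [Module.Free O M₂]
    {ME₂ : Type*} [AddCommGroup ME₂] [Module O ME₂] [Module E ME₂] [Module TE' ME₂]
    [IsScalarTower O TE' ME₂] [IsScalarTower O E ME₂] [IsScalarTower E TE' ME₂]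
    (iota₂ : M₂ →ₗ[O] ME₂) [IsLocalizedModule (nonZeroDivisors O) iota₂]
    (hiota₂ : ∀ (t : T') (m : M₂), iota₂ (t • m) = algebraMap T' TE' t • iota₂ m)
    (B : M₁ →ₗ[O] M₂ →ₗ[O] O)
    (hB : Function.Bijective B) (hBf : Function.Bijective B.flip)
    (BE : ME₁ →ₗ[E] ME₂ →ₗ[E] E)
    (hBE : ∀ (m : M₁) (m' : M₂), BE (iota₁ m) (iota₂ m') = algebraMap O E (B m m'))
    (horth₁ : ∀ (m : M₁) (m' : M₂), BE (e • iota₁ m) ((1 - e') • iota₂ m') = 0)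
    (horth₂ : ∀ (m : M₁) (m' : M₂), BE ((1 - e) • iota₁ m) (e' • iota₂ m') = 0)
    (δ₁ : M₁) (δ₂ : M₂)
    (hδ₁ : ∀ t : T, lam t = 0 → t • δ₁ = 0)
    (hδ₁basis : ∀ m : M₁, (∀ t : T, lam t = 0 → t • m = 0) → ∃! c : O, m = c • δ₁)
    (hδ₂ : ∀ t : T', lam' t = 0 → t • δ₂ = 0)
    (hδ₂basis : ∀ m : M₂, (∀ t : T', lam' t = 0 → t • m = 0) → ∃! c : O, m = c • δ₂) :
    fittingIdeal O (C0M e iota₁) = fittingIdeal O (C0M e' iota₂) ∧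
    fittingIdeal O (C0M e iota₁) = Ideal.span {B δ₁ δ₂} := by
  have key1 : fittingIdeal O (C0M e iota₁) = Ideal.span {B δ₁ δ₂} :=
    keyLemma lam lamE e hlamE he1 he2 lam' lamE' e' hlamE' he1' iota₁ hiota₁ iota₂ hiota₂
      B hB.2 BE hBE horth₂ δ₁ δ₂ hδ₁ hδ₁basis hδ₂ hδ₂basis
  have key2 : fittingIdeal O (C0M e' iota₂) = Ideal.span {B.flip δ₂ δ₁} :=
    keyLemma lam' lamE' e' hlamE' he1' he2' lam lamE e hlamE he1 iota₂ hiota₂ iota₁ hiota₁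
      B.flip hBf.2 BE.flip
      (fun m' m => by rw [LinearMap.flip_apply, hBE, LinearMap.flip_apply])
      (fun m' m => by rw [LinearMap.flip_apply]; exact horth₁ m m')
      δ₂ δ₁ hδ₂ hδ₂basis hδ₁ hδ₁basis
  have hflip : B.flip δ₂ δ₁ = B δ₁ δ₂ := LinearMap.flip_apply B δ₁ δ₂
  rw [hflip] at key2
  exact ⟨key1.trans key2.symm, key1⟩
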